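/- Let n ≥ 1, let ω₁ and ω₂ be n×n positive definite Hermitian complex matrices, set F = (1/n)·log(det ω₂ / det ω₁), and let t ∈ [0,1]. If F > 0, then (1/(t+1))·(1 − (1/n)·tr(ω₁⁻¹ω₂)) ≤ −F²/4. (This is the pointwise inequality behind the evolution inequality (∂_t − Δ)F ≤ −F²/4 in the proof that Kähler–Einstein metrics with Ric(ω) = −ω are unique.) -/

import Mathlib

open Matrix
open scoped ComplexOrder

/-- Pointwise inequality behind `(∂ₜ − Δ)F ≤ −F²/4` in the uniqueness proof for
Kähler–Einstein metrics with `Ric(ω) = −ω`. -/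
theorem uniqueness_pointwise_ineq (n : ℕ) (hn : 1 ≤ n)
    (ω₁ ω₂ : Matrix (Fin n) (Fin n) ℂ) (h₁ : ω₁.PosDef) (h₂ : ω₂.PosDef)
    (t : ℝ) (ht : t ∈ Set.Icc (0 : ℝ) 1)
    (F : ℝ) (hF : F = (1 / (n : ℝ)) * Real.log ((ω₂.det).re / (ω₁.det).re))
    (hFpos : 0 < F) :
    (1 / (t + 1)) * (1 - (1 / (n : ℝ)) * ((ω₁⁻¹ * ω₂).trace).re) ≤ -F ^ 2 / 4 := by
  obtain ⟨ht0, ht1⟩ := ht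
  have hnpos : (0 : ℝ) < n := by exact_mod_cast hn
  -- square root of ω₁⁻¹
  have hinv : (ω₁⁻¹).PosDef := h₁.inv
  set S : Matrix (Fin n) (Fin n) ℂ := (open scoped MatrixOrder in CFC.sqrt ω₁⁻¹) with hSdef
  have hSH : S.IsHermitian := by
    open scoped MatrixOrder in exact (CFC.sqrt_nonneg ω₁⁻¹).posSemidef.1
  have hSS : S * S = ω₁⁻¹ := by
    open scoped MatrixOrder in exact CFC.sqrt_mul_sqrt_self _ hinv.posSemidef.nonneg
  have hSunit : IsUnit S := by
    have hdet : IsUnit (S.det * S.det) := by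
      rw [← det_mul, hSS]; exact hinv.isUnit.map detMonoidHom
    exact (isUnit_iff_isUnit_det S).2 (isUnit_of_mul_isUnit_left hdet)
  -- M = S ω₂ S is positive definite
  set M : Matrix (Fin n) (Fin n) ℂ := S * ω₂ * S with hMdef
  have hM : M.PosDef := by
    refine PosDef.of_dotProduct_mulVec_pos ?_ (fun x hx => ?_)
    · show (S * ω₂ * S)ᴴ = S * ω₂ * S
      rw [conjTranspose_mul, conjTranspose_mul, hSH.eq, h₂.1.eq, mul_assoc]
    · have hSx : S *ᵥ x ≠ 0 := by
        have := Matrix.mulVec_injective_iff_isUnit.mpr hSunit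
        intro h
        exact hx (this (by simpa using h))
      have key : star x ⬝ᵥ (S * ω₂ * S) *ᵥ x = star (S *ᵥ x) ⬝ᵥ ω₂ *ᵥ (S *ᵥ x) := by
        rw [star_mulVec, hSH.eq, ← Matrix.mulVec_mulVec, ← Matrix.mulVec_mulVec,
          Matrix.dotProduct_mulVec _ S]
      rw [show M = S * ω₂ * S from rfl, key]
      exact h₂.dotProduct_mulVec_pos hSx
  set lam : Fin n → ℝ := hM.1.eigenvalues with hlamdef
  have hlampos : ∀ i, 0 < lam i := hM.eigenvalues_pos
  -- trace identity
  have htr : (ω₁⁻¹ * ω₂).trace = ∑ i, (lam i : ℂ) := by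
    have h1 : (ω₁⁻¹ * ω₂).trace = M.trace := by
      rw [← hSS, hMdef, mul_assoc, trace_mul_comm]
    rw [h1]
    conv_lhs => rw [hM.1.spectral_theorem, Unitary.conjStarAlgAut_apply]
    rw [trace_mul_comm, ← mul_assoc,
      (Matrix.mem_unitaryGroup_iff').mp (hM.1.eigenvectorUnitary).2, one_mul,
      trace_diagonal]
    simp
    rfl
  have htrre : ((ω₁⁻¹ * ω₂).trace).re = ∑ i, lam i := by
    rw [htr]; simp
  -- determinant identity
  have hd1 : (0 : ℂ) < ω₁.det := h₁.det_pos
  have hd2 : (0 : ℂ) < ω₂.det := h₂.det_pos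
  have hd1re : 0 < (ω₁.det).re := by
    have := (Complex.lt_def.mp hd1); simpa using this.1
  have hd2re : 0 < (ω₂.det).re := by
    have := (Complex.lt_def.mp hd2); simpa using this.1
  have hd1eq : ω₁.det = ((ω₁.det).re : ℂ) := by
    have := (Complex.lt_def.mp hd1).2
    exact Complex.ext rfl (by simpa using this.symm)
  have hd2eq : ω₂.det = ((ω₂.det).re : ℂ) := by
    have := (Complex.lt_def.mp hd2).2
    exact Complex.ext rfl (by simpa using this.symm)
  have hdetM : M.det = ω₁.det⁻¹ * ω₂.det := by
    rw [hMdef, det_mul, det_mul, mul_comm, ← mul_assoc, ← det_mul, hSS,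
      det_nonsing_inv, Ring.inverse_eq_inv]
  have hprod : ∏ i, lam i = (ω₂.det).re / (ω₁.det).re := by
    have h1 : (↑(∏ i, lam i) : ℂ) = ((ω₂.det).re / (ω₁.det).re : ℝ) := by
      have hdetprod : M.det = ∏ i, (lam i : ℂ) := hM.1.det_eq_prod_eigenvalues
      push_cast
      rw [← hdetprod, hdetM]
      rw [hd1eq, hd2eq]
      push_cast
      rw [div_eq_inv_mul]
      simp
    exact_mod_cast h1
  have hprodpos : 0 < ∏ i, lam i := Finset.prod_pos (fun i _ => hlampos i)
  -- F = (1/n) log (∏ lam)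
  have hFeq : F = (1 / (n : ℝ)) * Real.log (∏ i, lam i) := by rw [hF, hprod]
  -- AM-GM
  have hAMGM : Real.exp F ≤ (1 / (n : ℝ)) * ∑ i, lam i := by
    have hw : ∑ _i : Fin n, (1 / (n : ℝ)) = 1 := by
      simp [Finset.sum_const]
      field_simp
    have := Real.geom_mean_le_arith_mean_weighted Finset.univ
      (fun _ => (1 / (n : ℝ))) lam (fun i _ => by positivity)
      hw (fun i _ => (hlampos i).le)
    have hgeo : ∏ i, lam i ^ (1 / (n : ℝ)) = Real.exp F := by
      rw [Real.finset_prod_rpow _ _ (fun i _ => (hlampos i).le),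
        Real.rpow_def_of_pos hprodpos, hFeq, mul_comm]
    rw [hgeo] at this
    calc Real.exp F ≤ ∑ i, (1 / (n : ℝ)) * lam i := this
      _ = (1 / (n : ℝ)) * ∑ i, lam i := by rw [Finset.mul_sum]
  -- finish with real arithmetic
  have hexp : 1 + F + F ^ 2 / 2 ≤ Real.exp F := Real.quadratic_le_exp_of_nonneg hFpos.le
  set T : ℝ := (1 / (n : ℝ)) * ((ω₁⁻¹ * ω₂).trace).re with hT
  have hTe : T = (1 / (n : ℝ)) * ∑ i, lam i := by rw [hT, htrre]
  have hTge : Real.exp F ≤ T := by rw [hTe]; exact hAMGM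
  have htpos : (0 : ℝ) < t + 1 := by linarith
  rw [show (1 / (t + 1)) * (1 - T) = (1 - T) / (t + 1) from by ring,
    div_le_div_iff₀ htpos (by norm_num : (0:ℝ) < 4)]
  nlinarith [hTge, hexp, sq_nonneg F, mul_pos hFpos hFpos]
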